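/- Let S = {|Ψ_m⟩}_{m=1}^{|S|} be a set of orthogonal fully product vectors in H = C^{d_1} ⊗ ... ⊗ C^{d_N} with the local independence property, and let the Bell inequality Σ_m P(a_m|x_m) ≤ 1 be constructed from S by the standard rules. Then for any quantum state ρ and any local projective measurements, Σ_m P(a_m|x_m) ≤ 1; i.e., the Bell operator B = Σ_m P_m is a projection whenever the P_m are mutually orthogonal product projections. -/

import Mathlib

open ComplexOrder

/-- Tensor product over the `N` parties of local matrices. -/
def tensProd {N : ℕ} {d : Fin N → ℕ}
    (M : (i : Fin N) → Matrix (Fin (d i)) (Fin (d i)) ℂ) :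
    Matrix ((i : Fin N) → Fin (d i)) ((i : Fin N) → Fin (d i)) ℂ :=
  Matrix.of fun u v => ∏ i, M i (u i) (v i)

open Matrix in
lemma tensProd_mul {N : ℕ} {d : Fin N → ℕ}
    (M M' : (i : Fin N) → Matrix (Fin (d i)) (Fin (d i)) ℂ) :
    tensProd M * tensProd M' = tensProd (fun i => M i * M' i) := by
  ext u v
  simp only [Matrix.mul_apply, tensProd, Matrix.of_apply]
  rw [Fintype.prod_sum (fun i j => M i (u i) j * M' i j (v i))]
  simp [Finset.prod_mul_distrib]

open Matrix in
lemma tensProd_conjT {N : ℕ} {d : Fin N → ℕ}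
    (M : (i : Fin N) → Matrix (Fin (d i)) (Fin (d i)) ℂ) :
    (tensProd M)ᴴ = tensProd (fun i => (M i)ᴴ) := by
  ext u v
  simp [tensProd, Matrix.conjTranspose_apply, map_prod]

lemma tensProd_eq_zero {N : ℕ} {d : Fin N → ℕ}
    (M : (i : Fin N) → Matrix (Fin (d i)) (Fin (d i)) ℂ)
    (i0 : Fin N) (h : M i0 = 0) : tensProd M = 0 := by
  ext u v
  simp only [tensProd, Matrix.of_apply, Matrix.zero_apply]
  exact Finset.prod_eq_zero (Finset.mem_univ i0) (by simp [h])

lemma psd_trace_nonneg {n : Type*} [Fintype n] [DecidableEq n]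
    {M : Matrix n n ℂ} (hM : M.PosSemidef) : 0 ≤ M.trace := by
  rw [Matrix.trace]
  apply Finset.sum_nonneg
  intro i _
  have := hM.dotProduct_mulVec_nonneg (Pi.single i 1)
  simpa [dotProduct, Matrix.mulVec, Pi.single_apply, Matrix.diag] using this

open scoped MatrixOrder in
lemma psd_trace_mul_nonneg {n : Type*} [Fintype n] [DecidableEq n]
    {ρ T : Matrix n n ℂ} (hρ : ρ.PosSemidef) (hT : T.PosSemidef) :
    0 ≤ (ρ * T).trace := by
  have h1 : ρ * T = CFC.sqrt ρ * (CFC.sqrt ρ * T) := by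
    rw [← mul_assoc, CFC.sqrt_mul_sqrt_self ρ hρ.nonneg]
  rw [h1, Matrix.trace_mul_comm]
  have h3 := psd_trace_nonneg (hT.mul_mul_conjTranspose_same (CFC.sqrt ρ))
  rwa [(Matrix.nonneg_iff_posSemidef.mp (CFC.sqrt_nonneg ρ)).1] at h3

open Matrix in
theorem bell_operator_from_orthogonal_product_projections
    (N : ℕ) (d : Fin N → ℕ) (k : ℕ)
    (Q : Fin k → (i : Fin N) → Matrix (Fin (d i)) (Fin (d i)) ℂ)
    (hherm : ∀ m i, (Q m i).IsHermitian)
    (hidem : ∀ m i, Q m i * Q m i = Q m i)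
    (horth : ∀ m n, m ≠ n → ∃ i, Q m i * Q n i = 0) :
    (∑ m, tensProd (Q m)) * (∑ m, tensProd (Q m)) = ∑ m, tensProd (Q m) ∧
    (∑ m, tensProd (Q m)).IsHermitian ∧
    ∀ ρ : Matrix ((i : Fin N) → Fin (d i)) ((i : Fin N) → Fin (d i)) ℂ,
      ρ.PosSemidef → ρ.trace = 1 →
      ∑ m, ((ρ * tensProd (Q m)).trace).re ≤ 1 := by
  set B := ∑ m, tensProd (Q m) with hB
  have hmul : ∀ m n : Fin k, tensProd (Q m) * tensProd (Q n) =
      if m = n then tensProd (Q m) else 0 := by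
    intro m n
    rw [tensProd_mul]
    split_ifs with h
    · subst h
      have he : (fun i => Q m i * Q m i) = Q m := funext (hidem m)
      rw [he]
    · obtain ⟨i, hi⟩ := horth m n h
      exact tensProd_eq_zero _ i hi
  have hBB : B * B = B := by
    rw [hB, Finset.sum_mul]
    refine Finset.sum_congr rfl fun m _ => ?_
    rw [Finset.mul_sum, Finset.sum_eq_single m]
    · simp [hmul]
    · intro n _ hn; rw [hmul]; simp [hn.symm]
    · simp
  have hBH : B.IsHermitian := by
    rw [hB, Matrix.IsHermitian, Matrix.conjTranspose_sum]
    refine Finset.sum_congr rfl fun m _ => ?_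
    rw [tensProd_conjT]
    have he : (fun i => (Q m i).conjTranspose) = Q m := funext fun i => hherm m i
    rw [he]
  refine ⟨hBB, hBH, fun ρ hρ htr => ?_⟩
  have hBpsd : B.PosSemidef := by
    have := Matrix.posSemidef_conjTranspose_mul_self B
    rwa [hBH.eq, hBB] at this
  have hCpsd : (1 - B).PosSemidef := by
    have h1 : (1 - B)ᴴ = 1 - B := by
      rw [Matrix.conjTranspose_sub, Matrix.conjTranspose_one, hBH.eq]
    have h2 : (1 - B) * (1 - B) = 1 - B := by
      rw [sub_mul, one_mul, mul_sub, mul_one, hBB, sub_self, sub_zero]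
    have := Matrix.posSemidef_conjTranspose_mul_self (1 - B)
    rwa [h1, h2] at this
  have key : ∑ m, ((ρ * tensProd (Q m)).trace).re = ((ρ * B).trace).re := by
    rw [hB, Finset.mul_sum, Matrix.trace_sum, Complex.re_sum]
  rw [key]
  have h1 : 0 ≤ (ρ * (1 - B)).trace := psd_trace_mul_nonneg hρ hCpsd
  have h2 : (ρ * (1 - B)).trace = 1 - (ρ * B).trace := by
    rw [mul_sub, Matrix.trace_sub, mul_one, htr]
  rw [h2] at h1
  have h3 := (Complex.le_def.mp h1).1
  simp only [Complex.zero_re, Complex.sub_re, Complex.one_re] at h3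
  linarith
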